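/- Let d ≥ 1 and let (μ_t^(1))_{t≥1}, …, (μ_t^(d))_{t≥1} be d positive nonincreasing real sequences. For t ≥ 1 define the dot product ⟨u,v⟩_(t) = ∑_{i=1}^d (μ_t^(i))² u^(i) v^(i) on ℝ^d with associated norm ‖u‖_(t) = ⟨u,u⟩_(t)^{1/2}. Let (r_t)_{t≥1} be a sequence in ℝ^d, set R_0 = 0 and R_t = r_1 + ⋯ + r_t. Assume that for every t ≥ 1, ∑_{i=1}^d (μ_t^(i))² · r_t^(i) · max(0, R_{t-1}^(i)) ≤ 0 (the Blackwell algorithm condition for the target C = ℝ₋^d, whose projection residual is the componentwise positive part). Then for every component 1 ≤ i ≤ d and every T ≥ 1, (1/T)·∑_{t=1}^T r_t^(i) ≤ (1/(T·μ_T^(i)))·√(∑_{t=1}^T ‖r_t‖_(t)²). -/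

import Mathlib

open Finset

private lemma sq_max_add_le (a b : ℝ) :
    max 0 (a + b) ^ 2 ≤ max 0 a ^ 2 + 2 * b * max 0 a + b ^ 2 := by
  rcases le_or_gt (a + b) 0 with h | h
  · rw [max_eq_left h]
    nlinarith [le_max_left (0:ℝ) a, sq_nonneg (max 0 a + b)]
  · rw [max_eq_right h.le]
    nlinarith [le_max_left (0:ℝ) a, le_max_right (0:ℝ) a]

/-- Corollary 1: with the weighted dot products
`⟨u,v⟩_(t) = ∑ i, (μ_t^(i))² u^(i) v^(i)` given by positive nonincreasing
sequences `μ^(i)`, Blackwell's algorithm for the target `ℝ₋^d` gives, for each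
component `i`, `(1/T) ∑_{t≤T} r_t^(i) ≤ (1/(T μ_T^(i))) √(∑_{t≤T} ‖r_t‖_(t)²)`. -/
theorem blackwell_orthant_componentwise_rates
    (d : ℕ) (hd : 1 ≤ d) (μ : ℕ → Fin d → ℝ)
    (hμpos : ∀ t ≥ 1, ∀ i, 0 < μ t i)
    (hμmono : ∀ t ≥ 1, ∀ i, μ (t + 1) i ≤ μ t i)
    (r : ℕ → Fin d → ℝ) (R : ℕ → Fin d → ℝ)
    (hR : ∀ t, R t = ∑ s ∈ Finset.Icc 1 t, r s)
    -- Blackwell's algorithm condition for the target `ℝ₋^d`, whose projection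
    -- residual is the componentwise positive part
    (hBlackwell : ∀ t ≥ 1, ∑ i, μ t i ^ 2 * r t i * max 0 (R (t - 1) i) ≤ 0) :
    ∀ i : Fin d, ∀ T : ℕ, 1 ≤ T →
      (T : ℝ)⁻¹ * ∑ t ∈ Finset.Icc 1 T, r t i ≤
        ((T : ℝ) * μ T i)⁻¹ *
          Real.sqrt (∑ t ∈ Finset.Icc 1 T, ∑ i', μ t i' ^ 2 * r t i' ^ 2) := by
  have hR0 : ∀ i, R 0 i = 0 := by
    intro i; rw [hR]; simp
  have hRsucc : ∀ n i, R (n + 1) i = R n i + r (n + 1) i := by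
    intro n i
    rw [hR, hR]
    rw [Finset.sum_Icc_succ_top (by omega : 1 ≤ n + 1)]
    simp
  -- Key energy inequality
  have key : ∀ T, 1 ≤ T →
      ∑ i, μ T i ^ 2 * max 0 (R T i) ^ 2 ≤
        ∑ t ∈ Finset.Icc 1 T, ∑ i', μ t i' ^ 2 * r t i' ^ 2 := by
    intro T hT
    induction T with
    | zero => omega
    | succ n ih =>
      have step : ∑ i, μ (n + 1) i ^ 2 * max 0 (R (n + 1) i) ^ 2 ≤
          (∑ i, μ (n + 1) i ^ 2 * max 0 (R n i) ^ 2) +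
            ∑ i', μ (n + 1) i' ^ 2 * r (n + 1) i' ^ 2 := by
        have hB := hBlackwell (n + 1) (by omega)
        simp only [Nat.add_sub_cancel] at hB
        have hpt : ∀ i, μ (n + 1) i ^ 2 * max 0 (R (n + 1) i) ^ 2 ≤
            μ (n + 1) i ^ 2 * max 0 (R n i) ^ 2 +
              2 * (μ (n + 1) i ^ 2 * r (n + 1) i * max 0 (R n i)) +
              μ (n + 1) i ^ 2 * r (n + 1) i ^ 2 := by
          intro i
          have h := sq_max_add_le (R n i) (r (n + 1) i)
          rw [hRsucc]
          nlinarith [sq_nonneg (μ (n + 1) i)]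
        calc ∑ i, μ (n + 1) i ^ 2 * max 0 (R (n + 1) i) ^ 2
            ≤ ∑ i, (μ (n + 1) i ^ 2 * max 0 (R n i) ^ 2 +
                2 * (μ (n + 1) i ^ 2 * r (n + 1) i * max 0 (R n i)) +
                μ (n + 1) i ^ 2 * r (n + 1) i ^ 2) :=
              Finset.sum_le_sum fun i _ => hpt i
          _ = (∑ i, μ (n + 1) i ^ 2 * max 0 (R n i) ^ 2) +
                2 * (∑ i, μ (n + 1) i ^ 2 * r (n + 1) i * max 0 (R n i)) +
                ∑ i, μ (n + 1) i ^ 2 * r (n + 1) i ^ 2 := by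
              rw [Finset.sum_add_distrib, Finset.sum_add_distrib, Finset.mul_sum]
          _ ≤ (∑ i, μ (n + 1) i ^ 2 * max 0 (R n i) ^ 2) +
                ∑ i', μ (n + 1) i' ^ 2 * r (n + 1) i' ^ 2 := by
              linarith
      rcases Nat.eq_zero_or_pos n with hn | hn
      · subst hn
        have h0 : (∑ i, μ 1 i ^ 2 * max 0 (R 0 i) ^ 2) = 0 := by
          apply Finset.sum_eq_zero; intro i _; rw [hR0]; simp
        rw [h0, zero_add] at step
        simpa using step
      · have ih' := ih hn
        have hmono : (∑ i, μ (n + 1) i ^ 2 * max 0 (R n i) ^ 2) ≤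
            ∑ i, μ n i ^ 2 * max 0 (R n i) ^ 2 := by
          apply Finset.sum_le_sum
          intro i _
          have h1 := hμmono n hn i
          have h2 := (hμpos (n + 1) (by omega) i).le
          have := sq_nonneg (max 0 (R n i))
          exact mul_le_mul_of_nonneg_right (by nlinarith) this
        rw [Finset.sum_Icc_succ_top (by omega : 1 ≤ n + 1)]
        linarith
  intro i T hT
  have hμT := hμpos T hT i
  have hTpos : (0 : ℝ) < T := by exact_mod_cast hT
  set Ssum := ∑ t ∈ Finset.Icc 1 T, ∑ i', μ t i' ^ 2 * r t i' ^ 2 with hS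
  have hsum_nonneg : 0 ≤ Ssum := by
    apply Finset.sum_nonneg; intro t _
    apply Finset.sum_nonneg; intro i' _
    positivity
  have hone : μ T i ^ 2 * max 0 (R T i) ^ 2 ≤ Ssum := by
    refine le_trans ?_ (key T hT)
    exact Finset.single_le_sum (f := fun j => μ T j ^ 2 * max 0 (R T j) ^ 2)
      (fun j _ => by positivity) (Finset.mem_univ i)
  have hsqrt : μ T i * max 0 (R T i) ≤ Real.sqrt Ssum := by
    rw [show μ T i * max 0 (R T i) = Real.sqrt ((μ T i * max 0 (R T i)) ^ 2) from
      (Real.sqrt_sq (by positivity)).symm]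
    apply Real.sqrt_le_sqrt
    nlinarith
  have hRT : ∑ t ∈ Finset.Icc 1 T, r t i ≤ Real.sqrt Ssum / μ T i := by
    rw [le_div_iff₀ hμT]
    have : (∑ t ∈ Finset.Icc 1 T, r t i) = R T i := by
      rw [hR]; simp
    rw [this]
    calc R T i * μ T i ≤ max 0 (R T i) * μ T i := by
          apply mul_le_mul_of_nonneg_right (le_max_right 0 _) hμT.le
      _ = μ T i * max 0 (R T i) := mul_comm _ _
      _ ≤ Real.sqrt Ssum := hsqrt
  calc (T : ℝ)⁻¹ * ∑ t ∈ Finset.Icc 1 T, r t i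
      ≤ (T : ℝ)⁻¹ * (Real.sqrt Ssum / μ T i) :=
        mul_le_mul_of_nonneg_left hRT (by positivity)
    _ = ((T : ℝ) * μ T i)⁻¹ * Real.sqrt Ssum := by
        field_simp
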